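/- crx_1(K_{m,n}) = 4 for all 2 ≤ m ≤ n. -/
import Mathlib


open SimpleGraph

/-- `G.CycleThrough S`: there is a cycle in `G` containing all vertices of `S`. -/
def SimpleGraph.CycleThrough {V : Type*} (G : SimpleGraph V) (S : Set V) : Prop :=
  ∃ (u : V) (c : G.Walk u u), c.IsCycle ∧ ∀ v ∈ S, v ∈ c.support

/-- A `k`-rainbow cycle colouring: every `k`-set of vertices lies in a cycle whose
edges receive pairwise distinct colours. -/
def SimpleGraph.IsRainbowCycleColoring {V : Type*} (G : SimpleGraph V) (k : ℕ)
    (φ : Sym2 V → ℕ) : Prop :=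
  ∀ S : Finset V, S.card = k →
    ∃ (u : V) (c : G.Walk u u), c.IsCycle ∧ (∀ v ∈ S, v ∈ c.support) ∧
      (c.edges.map φ).Nodup

/-- The `k`-rainbow cycle index `crx_k(G)`. -/
noncomputable def SimpleGraph.crx {V : Type*} (G : SimpleGraph V) (k : ℕ) : ℕ :=
  sInf {r | ∃ φ : Sym2 V → ℕ, (∀ e ∈ G.edgeSet, φ e < r) ∧ G.IsRainbowCycleColoring k φ}

/-- Number of edges of `G`. -/
noncomputable def SimpleGraph.numEdges {V : Type*} (G : SimpleGraph V) : ℕ :=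
  Nat.card G.edgeSet

/-- A graph is 2-connected if it has more than 2 vertices and deleting any vertex
leaves it connected. -/
def SimpleGraph.IsTwoConnected {V : Type*} (G : SimpleGraph V) : Prop :=
  2 < Nat.card V ∧ ∀ v : V, (G.induce {w | w ≠ v}).Connected

/-- A graph is Hamiltonian if it has a cycle through all its vertices. -/
def SimpleGraph.IsHamiltonianGraph {V : Type*} (G : SimpleGraph V) : Prop :=
  ∃ (u : V) (c : G.Walk u u), c.IsCycle ∧ ∀ v : V, v ∈ c.support


lemma cycle4 {V : Type*} [DecidableEq V] {G : SimpleGraph V} {v0 v1 v2 v3 : V}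
    (h01 : G.Adj v0 v1) (h12 : G.Adj v1 v2) (h23 : G.Adj v2 v3) (h30 : G.Adj v3 v0)
    (h02 : v0 ≠ v2) (h13 : v1 ≠ v3) :
    ∃ c : G.Walk v0 v0, c.IsCycle ∧ c.support = [v0, v1, v2, v3, v0] ∧
      c.edges = [s(v0,v1), s(v1,v2), s(v2,v3), s(v3,v0)] := by
  refine ⟨.cons h01 (.cons h12 (.cons h23 (.cons h30 .nil))), ?_, by simp, by simp⟩
  have n01 := h01.ne
  have n12 := h12.ne
  have n23 := h23.ne
  have n30 := h30.ne
  constructor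
  · constructor
    · rw [Walk.isTrail_def]
      simp [Sym2.eq_iff]
      aesop
    · simp
  · simp
    aesop

lemma parity_walk {m n : ℕ} {u v : Fin m ⊕ Fin n}
    (w : (completeBipartiteGraph (Fin m) (Fin n)).Walk u v) :
    Even w.length ↔ u.isLeft = v.isLeft := by
  induction w with
  | nil => simp
  | @cons a b c h p ih =>
    simp only [Walk.length_cons, Nat.even_add_one, ih]
    rcases a with a | a <;> rcases b with b | b <;> rcases c with c | c <;>
      simp_all [completeBipartiteGraph]

/-- colour of the edge between left vertex `a` and right vertex `b` (values). -/
def gcol (a b : ℕ) : ℕ :=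
  if b = 0 then (if a = 0 then 0 else 1)
  else if b = 1 then (if a = 0 then 3 else 2)
  else (if a = 0 then 2 else if a = 1 then 3 else 0)

lemma gcol_lt (a b : ℕ) : gcol a b < 4 := by
  unfold gcol; split_ifs <;> omega

def fcol (m n : ℕ) : Fin m ⊕ Fin n → Fin m ⊕ Fin n → ℕ
  | .inl a, .inr b => gcol a.val b.val
  | .inr b, .inl a => gcol a.val b.val
  | _, _ => 0

lemma fcol_symm (m n : ℕ) (x y : Fin m ⊕ Fin n) : fcol m n x y = fcol m n y x := by
  rcases x with a | a <;> rcases y with b | b <;> rfl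

noncomputable def phi (m n : ℕ) : Sym2 (Fin m ⊕ Fin n) → ℕ :=
  Sym2.lift ⟨fcol m n, fcol_symm m n⟩

lemma phi_mk (m n : ℕ) (a : Fin m) (b : Fin n) :
    phi m n s(Sum.inl a, Sum.inr b) = gcol a.val b.val := rfl

lemma phi_mk' (m n : ℕ) (a : Fin m) (b : Fin n) :
    phi m n s(Sum.inr b, Sum.inl a) = gcol a.val b.val := rfl

/-- crx_1(K_{m,n}) = 4 for 2 ≤ m ≤ n. -/
theorem crx_one_completeBipartite (m n : ℕ) (hm : 2 ≤ m) (hmn : m ≤ n) :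
    (completeBipartiteGraph (Fin m) (Fin n)).crx 1 = 4 := by
  have hn : 2 ≤ n := hmn.trans' hm
  set G := completeBipartiteGraph (Fin m) (Fin n) with hG
  set S := {r | ∃ φ : Sym2 (Fin m ⊕ Fin n) → ℕ,
      (∀ e ∈ G.edgeSet, φ e < r) ∧ G.IsRainbowCycleColoring 1 φ} with hS
  have a0 : Fin m := ⟨0, by omega⟩
  -- membership of 4
  have h4 : 4 ∈ S := by
    refine ⟨phi m n, ?_, ?_⟩
    · intro e he
      induction e with
      | h x y =>
        rcases x with a | a <;> rcases y with b | b
        · simp [hG, completeBipartiteGraph] at he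
        · exact gcol_lt _ _
        · exact gcol_lt _ _
        · simp [hG, completeBipartiteGraph] at he
    · intro T hT
      obtain ⟨v, rfl⟩ := Finset.card_eq_one.mp hT
      have A0 : Fin m := ⟨0, by omega⟩
      -- set up the four base vertices
      set a0 : Fin m := ⟨0, by omega⟩ with ha0
      set a1 : Fin m := ⟨1, by omega⟩ with ha1
      set b0 : Fin n := ⟨0, by omega⟩ with hb0
      set b1 : Fin n := ⟨1, by omega⟩ with hb1
      rcases v with a | b
      · by_cases h2 : a.val < 2
        · -- a = a0 or a1; use base cycle a0 - b0 - a1 - b1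
          obtain ⟨c, hc, hsup, hed⟩ := cycle4 (G := G)
            (v0 := Sum.inl a0) (v1 := Sum.inr b0) (v2 := Sum.inl a1) (v3 := Sum.inr b1)
            (by simp [hG]) (by simp [hG]) (by simp [hG]) (by simp [hG])
            (by simp [ha0, ha1, Fin.ext_iff]) (by simp [hb0, hb1, Fin.ext_iff])
          refine ⟨_, c, hc, ?_, ?_⟩
          · intro v hv
            simp only [Finset.mem_singleton] at hv
            subst hv
            rw [hsup]
            interval_cases h : a.val
            · have : a = a0 := by simp [ha0, Fin.ext_iff, h]
              simp [this]
            · have : a = a1 := by simp [ha1, Fin.ext_iff, h]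
              simp [this]
          · rw [hed]
            simp [phi_mk, phi_mk', ha0, ha1, hb0, hb1, gcol]
        · -- a.val ≥ 2 : cycle (inl a) - b0 - a0 - b1
          obtain ⟨c, hc, hsup, hed⟩ := cycle4 (G := G)
            (v0 := Sum.inl a) (v1 := Sum.inr b0) (v2 := Sum.inl a0) (v3 := Sum.inr b1)
            (by simp [hG]) (by simp [hG]) (by simp [hG]) (by simp [hG])
            (by simp [ha0, Fin.ext_iff]; omega) (by simp [hb0, hb1, Fin.ext_iff])
          refine ⟨_, c, hc, ?_, ?_⟩
          · intro v hv
            simp only [Finset.mem_singleton] at hv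
            subst hv
            rw [hsup]; simp
          · rw [hed]
            have hane : a.val ≠ 0 := by omega
            simp [phi_mk, phi_mk', ha0, hb0, hb1, gcol, hane]
      · by_cases h2 : b.val < 2
        · obtain ⟨c, hc, hsup, hed⟩ := cycle4 (G := G)
            (v0 := Sum.inl a0) (v1 := Sum.inr b0) (v2 := Sum.inl a1) (v3 := Sum.inr b1)
            (by simp [hG]) (by simp [hG]) (by simp [hG]) (by simp [hG])
            (by simp [ha0, ha1, Fin.ext_iff]) (by simp [hb0, hb1, Fin.ext_iff])
          refine ⟨_, c, hc, ?_, ?_⟩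
          · intro v hv
            simp only [Finset.mem_singleton] at hv
            subst hv
            rw [hsup]
            interval_cases h : b.val
            · have : b = b0 := by simp [hb0, Fin.ext_iff, h]
              simp [this]
            · have : b = b1 := by simp [hb1, Fin.ext_iff, h]
              simp [this]
          · rw [hed]
            simp [phi_mk, phi_mk', ha0, ha1, hb0, hb1, gcol]
        · -- b.val ≥ 2 : cycle (inr b) - a0 - b0 - a1
          obtain ⟨c, hc, hsup, hed⟩ := cycle4 (G := G)
            (v0 := Sum.inr b) (v1 := Sum.inl a0) (v2 := Sum.inr b0) (v3 := Sum.inl a1)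
            (by simp [hG]) (by simp [hG]) (by simp [hG]) (by simp [hG])
            (by simp [hb0, Fin.ext_iff]; omega) (by simp [ha0, ha1, Fin.ext_iff])
          refine ⟨_, c, hc, ?_, ?_⟩
          · intro v hv
            simp only [Finset.mem_singleton] at hv
            subst hv
            rw [hsup]; simp
          · rw [hed]
            have hbne : b.val ≠ 0 := by omega
            have hbne1 : b.val ≠ 1 := by omega
            simp [phi_mk, phi_mk', ha0, ha1, hb0, gcol, hbne, hbne1]
  -- lower bound: every member of S is ≥ 4
  have hge : ∀ r ∈ S, 4 ≤ r := by
    intro r hr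
    by_contra hlt
    push_neg at hlt
    obtain ⟨φ, hφlt, hφ⟩ := hr
    obtain ⟨u, c, hc, _, hnd⟩ := hφ {Sum.inl (⟨0, by omega⟩ : Fin m)} (by simp)
    -- cycle length ≥ 4
    have h3 : 3 ≤ c.length := hc.three_le_length
    have heven : Even c.length := by
      rw [parity_walk]
    have h4len : 4 ≤ c.length := by
      rcases heven with ⟨k, hk⟩; omega
    -- all colours in edges < r ≤ 3
    have hlen : (c.edges.map φ).length = c.length := by
      simp [Walk.length_edges]
    have hsub : ∀ x ∈ c.edges.map φ, x < r := by
      intro x hx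
      simp only [List.mem_map] at hx
      obtain ⟨e, he, rfl⟩ := hx
      exact hφlt e (c.edges_subset_edgeSet he)
    have hcard : (c.edges.map φ).toFinset.card = (c.edges.map φ).length :=
      List.toFinset_card_of_nodup hnd
    have hsubset : (c.edges.map φ).toFinset ⊆ Finset.range r := by
      intro x hx
      simp only [List.mem_toFinset] at hx
      exact Finset.mem_range.mpr (hsub x hx)
    have := Finset.card_le_card hsubset
    rw [hcard, Finset.card_range] at this
    omega
  refine le_antisymm (Nat.sInf_le h4) (hge _ (Nat.sInf_mem ⟨4, h4⟩))
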